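/- Let d ≥ 1 and let Q and μ be nonatomic Borel probability measures on ℝ^d. Then 0 ≤ D(x|Q,μ) ≤ 1 for every x ∈ ℝ^d; consequently, for every constant-speed path β : [0,1] → ℝ^d whose arc-length measure equals μ, the curve depth ∫ D(x|Q,μ) dμ(x) lies in the interval [0,1]. (Boundedness part of Theorem 3.2 of the paper.) -/

import Mathlib

open MeasureTheory Set Filter
open scoped ENNReal RealInnerProductSpace

noncomputable section

abbrev Euc (d : ℕ) := EuclideanSpace ℝ (Fin d)

def halfSpace {d : ℕ} (u x : Euc d) : Set (Euc d) := {y | ⟪x, u⟫ ≤ ⟪y, u⟫}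

/-- Point curve depth `D(x | Q, μ)`, with the `ℝ≥0∞` division conventions
`a / 0 = ∞` for `a > 0` and `0 / 0 = 0`. -/
def pointDepth {d : ℕ} (Q μ : Measure (Euc d)) (x : Euc d) : ℝ≥0∞ :=
  ⨅ (u : Euc d) (_ : ‖u‖ = 1), Q (halfSpace u x) / μ (halfSpace u x)

def curveDepth {d : ℕ} (Q μ : Measure (Euc d)) : ℝ≥0∞ :=
  ∫⁻ x, pointDepth Q μ x ∂μ

namespace CurveDepthAux

variable {d : ℕ}

lemma halfSpace_smul (u x : Euc d) {c : ℝ} (hc : 0 < c) :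
    halfSpace (c • u) x = halfSpace u x := by
  ext y
  simp only [halfSpace, mem_setOf_eq, real_inner_smul_right]
  exact mul_le_mul_iff_right₀ hc

lemma measurableSet_nonneg_inner (w : Euc d) :
    MeasurableSet {u : Euc d | 0 ≤ ⟪w, u⟫} :=
  (isClosed_le continuous_const (continuous_const.inner continuous_id)).measurableSet

/-- The set of directions making a nonnegative inner product with a fixed nonzero
vector occupies exactly half of the unit ball (in volume). -/
lemma half_volume (w : Euc d) (hw : w ≠ 0) :
    volume ({u : Euc d | 0 ≤ ⟪w, u⟫} ∩ Metric.ball 0 1)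
      = volume (Metric.ball (0 : Euc d) 1) / 2 := by
  set A : Set (Euc d) := {u | 0 ≤ ⟪w, u⟫} ∩ Metric.ball 0 1 with hA
  set B : Set (Euc d) := {u | ⟪w, u⟫ ≤ 0} ∩ Metric.ball 0 1 with hB
  have hpre : Neg.neg ⁻¹' A = B := by
    ext u
    simp only [hA, hB, mem_preimage, mem_inter_iff, mem_setOf_eq, inner_neg_right,
      mem_ball_zero_iff, norm_neg, neg_nonneg]
  have hBA : volume B = volume A := by
    rw [← hpre, Measure.measure_preimage_neg]
  have hker : volume {u : Euc d | ⟪w, u⟫ = 0} = 0 := by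
    have : {u : Euc d | ⟪w, u⟫ = 0}
        = (LinearMap.ker (innerSL ℝ w).toLinearMap : Set (Euc d)) := by
      ext u; simp [LinearMap.mem_ker]
    rw [this]
    refine Measure.addHaar_submodule _ _ (fun htop => hw ?_)
    have hwmem : w ∈ LinearMap.ker (innerSL ℝ w).toLinearMap := by
      rw [htop]; trivial
    have : ⟪w, w⟫ = 0 := hwmem
    exact inner_self_eq_zero.mp this
  have hunion : A ∪ B = Metric.ball 0 1 := by
    ext u
    simp only [hA, hB, mem_union, mem_inter_iff, mem_setOf_eq]
    constructor
    · rintro (⟨_, h⟩ | ⟨_, h⟩) <;> exact h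
    · intro h
      rcases le_total (0 : ℝ) ⟪w, u⟫ with h' | h'
      · exact Or.inl ⟨h', h⟩
      · exact Or.inr ⟨h', h⟩
  have hinter : volume (A ∩ B) = 0 := by
    refine measure_mono_null (fun u hu => ?_) hker
    exact le_antisymm hu.2.1 hu.1.1
  have hBmeas : MeasurableSet B :=
    ((isClosed_le (continuous_const.inner continuous_id)
      continuous_const).measurableSet).inter Metric.isOpen_ball.measurableSet
  have hsum : volume A + volume B = volume (Metric.ball (0 : Euc d) 1) := by
    have := measure_union_add_inter (μ := (volume : Measure (Euc d))) A hBmeas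
    rw [hunion, hinter, add_zero] at this
    exact this.symm
  rw [hBA, ← two_mul] at hsum
  exact ((ENNReal.eq_div_iff (by norm_num) (by norm_num)).mpr hsum)

lemma measurableSet_T (x : Euc d) :
    MeasurableSet {p : Euc d × Euc d | ⟪x, p.1⟫ ≤ ⟪p.2, p.1⟫} :=
  (isClosed_le (continuous_const.inner continuous_fst)
    (continuous_snd.inner continuous_fst)).measurableSet

/-- Averaging the halfspace mass over directions in the unit ball gives exactly
half the volume of the ball, for any nonatomic probability measure. -/
lemma integral_half (x : Euc d) (P : Measure (Euc d)) [IsProbabilityMeasure P]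
    (hP : P {x} = 0) :
    ∫⁻ u, P (halfSpace u x) ∂(volume.restrict (Metric.ball (0 : Euc d) 1))
      = volume (Metric.ball (0 : Euc d) 1) / 2 := by
  set ν := volume.restrict (Metric.ball (0 : Euc d) 1) with hν
  set T : Set (Euc d × Euc d) := {p | ⟪x, p.1⟫ ≤ ⟪p.2, p.1⟫} with hT
  have hTm : MeasurableSet T := measurableSet_T x
  have h1 : ∫⁻ u, P (halfSpace u x) ∂ν = (ν.prod P) T := by
    rw [Measure.prod_apply hTm]; rfl
  rw [h1, Measure.prod_apply_symm hTm]
  have hxne : ∀ᵐ y ∂P, y ≠ x := by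
    rw [ae_iff]
    simpa [not_not] using hP
  have hcong : ∀ᵐ y ∂P, ν ((fun u => (u, y)) ⁻¹' T)
      = volume (Metric.ball (0 : Euc d) 1) / 2 := by
    filter_upwards [hxne] with y hy
    have hset : (fun u => (u, y)) ⁻¹' T = {u : Euc d | 0 ≤ ⟪y - x, u⟫} := by
      ext u
      simp [hT, inner_sub_left, sub_nonneg]
    rw [hset, hν, Measure.restrict_apply (measurableSet_nonneg_inner _)]
    exact half_volume (y - x) (sub_ne_zero.mpr hy)
  rw [lintegral_congr_ae hcong, lintegral_const, measure_univ, mul_one]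

lemma pointDepth_le_one (hd : 1 ≤ d) (Q μ : Measure (Euc d))
    [IsProbabilityMeasure Q] [IsProbabilityMeasure μ]
    (hQatom : ∀ x, Q {x} = 0) (hμatom : ∀ x, μ {x} = 0) (x : Euc d) :
    pointDepth Q μ x ≤ 1 := by
  by_contra hcon
  push_neg at hcon
  haveI : Nonempty (Fin d) := ⟨⟨0, hd⟩⟩
  haveI : Nontrivial (Euc d) := inferInstance
  -- from the assumed strict lower bound, every halfspace has more Q-mass than μ-mass
  have key : ∀ u : Euc d, u ≠ 0 → μ (halfSpace u x) < Q (halfSpace u x) := by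
    intro u hu
    have hnorm : ‖((‖u‖⁻¹ : ℝ) • u : Euc d)‖ = 1 := norm_smul_inv_norm hu
    have hle : pointDepth Q μ x
        ≤ Q (halfSpace ((‖u‖⁻¹ : ℝ) • u) x) / μ (halfSpace ((‖u‖⁻¹ : ℝ) • u) x) := by
      unfold pointDepth
      exact iInf₂_le ((‖u‖⁻¹ : ℝ) • u) hnorm
    rw [halfSpace_smul u x (inv_pos.mpr (norm_pos_iff.mpr hu))] at hle
    have h1 : (1 : ℝ≥0∞) < Q (halfSpace u x) / μ (halfSpace u x) := lt_of_lt_of_le hcon hle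
    by_contra hge
    push_neg at hge
    have : Q (halfSpace u x) / μ (halfSpace u x) ≤ 1 :=
      ENNReal.div_le_of_le_mul (by rwa [one_mul])
    exact absurd h1 (not_lt.mpr this)
  set ν := volume.restrict (Metric.ball (0 : Euc d) 1) with hνdef
  have hQint := integral_half x Q (hQatom x)
  have hμint := integral_half x μ (hμatom x)
  have hb0 : volume (Metric.ball (0 : Euc d) 1) ≠ 0 :=
    (Metric.measure_ball_pos _ _ one_pos).ne'
  have hbt : volume (Metric.ball (0 : Euc d) 1) ≠ ∞ := measure_ball_lt_top.ne
  have hν0 : ν ≠ 0 := by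
    intro h
    apply hb0
    have : ν univ = 0 := by rw [h]; simp
    rwa [hνdef, Measure.restrict_apply_univ] at this
  have hzero : volume ({(0 : Euc d)} : Set (Euc d)) = 0 := by
    have h := Measure.addHaar_submodule (volume : Measure (Euc d)) ⊥ bot_ne_top
    rwa [Submodule.bot_coe] at h
  have ha : ∀ᵐ u ∂ν, μ (halfSpace u x) < Q (halfSpace u x) := by
    rw [ae_iff]
    refine measure_mono_null (fun u hu => ?_)
      (le_antisymm (le_trans (Measure.restrict_le_self _) hzero.le) zero_le)
    simp only [mem_setOf_eq, not_lt] at hu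
    by_contra h0
    exact absurd (key u h0) (not_lt.mpr hu)
  have hmeasQ : Measurable fun u : Euc d => Q (halfSpace u x) :=
    measurable_measure_prodMk_left (measurableSet_T x)
  have hfin : ∫⁻ u, μ (halfSpace u x) ∂ν ≠ ∞ := by
    rw [hμint]
    exact ne_top_of_le_ne_top hbt ENNReal.half_le_self
  have hlt := lintegral_strict_mono hν0 hmeasQ.aemeasurable hfin ha
  rw [hQint, hμint] at hlt
  exact lt_irrefl _ hlt

end CurveDepthAux

/-- Boundedness part of Theorem 3.2 of the paper: for nonatomic Borel probability
measures `Q` and `μ`, the point curve depth lies in `[0,1]` everywhere (nonnegativity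
is automatic in `ℝ≥0∞`), and consequently the curve depth of any constant-speed path
whose arc-length measure is `μ` lies in `[0,1]`. -/
theorem pointDepth_le_one_and_curveDepth_le_one
    (d : ℕ) (hd : 1 ≤ d)
    (Q μ : Measure (Euc d)) [IsProbabilityMeasure Q] [IsProbabilityMeasure μ]
    (hQatom : ∀ x, Q {x} = 0) (hμatom : ∀ x, μ {x} = 0) :
    (∀ x : Euc d, pointDepth Q μ x ≤ 1) ∧
    (∀ (β : ℝ → Euc d) (L : ℝ), ContinuousOn β (Icc 0 1) → 0 < L →
      (∀ t ∈ Icc (0:ℝ) 1, eVariationOn β (Icc 0 t) = ENNReal.ofReal (t * L)) →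
      (volume.restrict (Icc (0:ℝ) 1)).map β = μ →
      curveDepth Q μ ≤ 1) := by
  have h1 : ∀ x : Euc d, pointDepth Q μ x ≤ 1 :=
    CurveDepthAux.pointDepth_le_one hd Q μ hQatom hμatom
  refine ⟨h1, fun β L _ _ _ _ => ?_⟩
  calc curveDepth Q μ ≤ ∫⁻ _, 1 ∂μ := lintegral_mono h1
    _ = 1 := by simp
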